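/- arXiv:2502.11074 — 3 statements merged into one kernel-verified Lean document; each statement's English description precedes it below -/
import Mathlib

section
/- Let A be symmetric and B symmetric positive definite, both n×n, and let ρ* be the maximum of J(P) = trace(P^T A P)/trace(P^T B P) over P ∈ ℝ^{n×d} with P^T P = I_d. Then the maximum over the same Stiefel manifold of trace(P^T (A − ρ* B) P) equals 0. -/
open Matrix

lemma trace_conj_pos {n d : ℕ} (hd : 0 < d) {B : Matrix (Fin n) (Fin n) ℝ}
    (hB : B.PosDef) (P : Matrix (Fin n) (Fin d) ℝ) (hP : Pᵀ * P = 1) :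
    0 < (Pᵀ * B * P).trace := by
  have key : ∀ i : Fin d, 0 < (Pᵀ * B * P) i i := by
    intro i
    set v : Fin n → ℝ := fun j => P j i with hv
    have hvne : v ≠ 0 := by
      intro h
      have h1 : (Pᵀ * P) i i = 1 := by rw [hP]; simp
      have : (Pᵀ * P) i i = ∑ j, v j * v j := by
        simp [Matrix.mul_apply, Matrix.transpose_apply, hv]
      rw [this, h] at h1
      simp at h1
    have := hB.dotProduct_mulVec_pos hvne
    have heq : (Pᵀ * B * P) i i = v ⬝ᵥ B *ᵥ v := by
      simp only [Matrix.mul_apply, Matrix.transpose_apply, dotProduct,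
        Matrix.mulVec, Finset.sum_mul, Finset.mul_sum]
      rw [Finset.sum_comm]
      congr 1; ext j; congr 1; ext k; ring
    rw [heq]
    simpa using this
  rw [Matrix.trace]
  exact Finset.sum_pos (fun i _ => key i) (by simpa using Finset.univ_nonempty_iff.mpr ⟨⟨0, hd⟩⟩)

theorem stmt_2 (n d : ℕ) (hd : 0 < d) (hdn : d ≤ n)
    (A B : Matrix (Fin n) (Fin n) ℝ) (hA : A.IsSymm) (hB : B.PosDef)
    (ρstar : ℝ)
    (hρ : IsGreatest
      {r : ℝ | ∃ P : Matrix (Fin n) (Fin d) ℝ, Pᵀ * P = 1 ∧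
        (Pᵀ * A * P).trace / (Pᵀ * B * P).trace = r} ρstar) :
    IsGreatest
      {r : ℝ | ∃ P : Matrix (Fin n) (Fin d) ℝ, Pᵀ * P = 1 ∧
        (Pᵀ * (A - ρstar • B) * P).trace = r} 0 := by
  obtain ⟨⟨P₀, hP₀, hP₀r⟩, hub⟩ := hρ
  have expand : ∀ P : Matrix (Fin n) (Fin d) ℝ,
      (Pᵀ * (A - ρstar • B) * P).trace
        = (Pᵀ * A * P).trace - ρstar * (Pᵀ * B * P).trace := by
    intro P
    have : Pᵀ * (A - ρstar • B) * P = Pᵀ * A * P - ρstar • (Pᵀ * B * P) := by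
      rw [Matrix.mul_sub, Matrix.sub_mul]
      congr 1
      rw [Matrix.mul_smul, Matrix.smul_mul]
    rw [this, Matrix.trace_sub, Matrix.trace_smul, smul_eq_mul]
  constructor
  · refine ⟨P₀, hP₀, ?_⟩
    have hb := trace_conj_pos hd hB P₀ hP₀
    rw [expand]
    rw [div_eq_iff (ne_of_gt hb)] at hP₀r
    rw [hP₀r]; ring
  · rintro r ⟨P, hP, rfl⟩
    have hb := trace_conj_pos hd hB P hP
    have hle : (Pᵀ * A * P).trace / (Pᵀ * B * P).trace ≤ ρstar :=
      hub ⟨P, hP, rfl⟩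
    rw [div_le_iff₀ hb] at hle
    rw [expand]
    linarith
end

section
/- With f(ρ) = max_{P^T P = I_d} trace(P^T(A − ρB)P), A symmetric, B symmetric positive definite, the equation f(ρ) = 0 has a unique solution ρ*, and ρ* equals the maximum of the trace ratio trace(P^T A P)/trace(P^T B P) over the Stiefel manifold. -/
open Matrix

private lemma stmt5_trace_eq {n d : ℕ} (M : Matrix (Fin n) (Fin n) ℝ)
    (P : Matrix (Fin n) (Fin d) ℝ) :
    (Pᵀ * M * P).trace = ∑ j, (fun i => P i j) ⬝ᵥ M *ᵥ (fun i => P i j) := by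
  simp only [Matrix.trace, Matrix.diag_apply, Matrix.mul_apply, Matrix.transpose_apply,
    dotProduct, Matrix.mulVec, Finset.sum_mul, Finset.mul_sum]
  refine Finset.sum_congr rfl fun j _ => ?_
  rw [Finset.sum_comm]
  exact Finset.sum_congr rfl fun i _ => Finset.sum_congr rfl fun k _ => by ring

private lemma stmt5_quad_decomp {n : ℕ} (B : Matrix (Fin n) (Fin n) ℝ) (hB : B.IsHermitian)
    (x : Fin n → ℝ) :
    ∃ y : Fin n → ℝ, x ⬝ᵥ B *ᵥ x = ∑ i, hB.eigenvalues i * y i ^ 2 ∧ x ⬝ᵥ x = ∑ i, y i ^ 2 := by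
  classical
  set U : Matrix (Fin n) (Fin n) ℝ := (hB.eigenvectorUnitary : Matrix (Fin n) (Fin n) ℝ) with hU
  have hUU : U * star U = 1 := Matrix.mem_unitaryGroup_iff.mp hB.eigenvectorUnitary.2
  set y : Fin n → ℝ := star U *ᵥ x with hy
  have hxy : ∀ z, x ⬝ᵥ (U *ᵥ z) = y ⬝ᵥ z := by
    intro z
    rw [Matrix.dotProduct_mulVec]
    congr 1
    rw [hy, Matrix.star_eq_conjTranspose, Matrix.conjTranspose_eq_transpose_of_trivial,
      Matrix.mulVec_transpose]
  refine ⟨y, ?_, ?_⟩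
  · conv_lhs => rw [hB.spectral_theorem, Unitary.conjStarAlgAut_apply]
    rw [← Matrix.mulVec_mulVec, ← Matrix.mulVec_mulVec]
    rw [hxy (Matrix.diagonal (RCLike.ofReal ∘ hB.eigenvalues) *ᵥ (star U *ᵥ x))]
    rw [← hy]
    simp [Matrix.mulVec_diagonal, dotProduct]
    exact Finset.sum_congr rfl fun i _ => by ring
  · have : x ⬝ᵥ x = x ⬝ᵥ ((U * star U) *ᵥ x) := by rw [hUU, Matrix.one_mulVec]
    rw [this, ← Matrix.mulVec_mulVec, hxy (star U *ᵥ x), ← hy, dotProduct]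
    exact Finset.sum_congr rfl fun i _ => by ring

/-- uniform bounds on trace(PᵀBP) over the Stiefel manifold -/
private lemma stmt5_trace_bounds {n d : ℕ} (hd : 0 < d) (hdn : d ≤ n)
    (B : Matrix (Fin n) (Fin n) ℝ) (hB : B.PosDef) :
    ∃ c C : ℝ, 0 < c ∧ c ≤ C ∧ ∀ P : Matrix (Fin n) (Fin d) ℝ, Pᵀ * P = 1 →
      c ≤ (Pᵀ * B * P).trace ∧ (Pᵀ * B * P).trace ≤ C := by
  classical
  have hn : 0 < n := lt_of_lt_of_le hd hdn
  haveI : Nonempty (Fin n) := ⟨⟨0, hn⟩⟩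
  obtain ⟨i0, -, hmin⟩ := Finset.exists_min_image Finset.univ hB.1.eigenvalues ⟨Classical.arbitrary _, Finset.mem_univ _⟩
  obtain ⟨i1, -, hmax⟩ := Finset.exists_max_image Finset.univ hB.1.eigenvalues ⟨Classical.arbitrary _, Finset.mem_univ _⟩
  set lmin := hB.1.eigenvalues i0
  set lmax := hB.1.eigenvalues i1
  have hlmin : 0 < lmin := hB.eigenvalues_pos i0
  have hminmax : lmin ≤ lmax := hmin i1 (Finset.mem_univ _)
  refine ⟨d * lmin, d * lmax, by positivity, by
    have : (d:ℝ) ≥ 1 := by exact_mod_cast hd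
    nlinarith, ?_⟩
  intro P hP
  have hquad : ∀ j : Fin d,
      lmin ≤ (fun i => P i j) ⬝ᵥ B *ᵥ (fun i => P i j) ∧
      (fun i => P i j) ⬝ᵥ B *ᵥ (fun i => P i j) ≤ lmax := by
    intro j
    obtain ⟨y, h1, h2⟩ := stmt5_quad_decomp B hB.1 (fun i => P i j)
    have hnorm : (fun i => P i j) ⬝ᵥ (fun i => P i j) = 1 := by
      have := congrFun (congrFun hP j) j
      simpa [Matrix.mul_apply, Matrix.one_apply, dotProduct] using this
    rw [hnorm] at h2
    constructor
    · rw [h1]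
      calc lmin = lmin * ∑ i, y i ^ 2 := by rw [← h2]; ring
        _ ≤ ∑ i, hB.1.eigenvalues i * y i ^ 2 := by
            rw [Finset.mul_sum]
            exact Finset.sum_le_sum fun i _ =>
              mul_le_mul_of_nonneg_right (hmin i (Finset.mem_univ _)) (sq_nonneg _)
    · rw [h1]
      calc ∑ i, hB.1.eigenvalues i * y i ^ 2 ≤ lmax * ∑ i, y i ^ 2 := by
            rw [Finset.mul_sum]
            exact Finset.sum_le_sum fun i _ =>
              mul_le_mul_of_nonneg_right (hmax i (Finset.mem_univ _)) (sq_nonneg _)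
        _ = lmax := by rw [← h2]; ring
  rw [stmt5_trace_eq]
  constructor
  · calc (d : ℝ) * lmin = ∑ _j : Fin d, lmin := by simp [Finset.sum_const]
      _ ≤ _ := Finset.sum_le_sum fun j _ => (hquad j).1
  · calc _ ≤ ∑ _j : Fin d, lmax := Finset.sum_le_sum fun j _ => (hquad j).2
      _ = (d : ℝ) * lmax := by simp [Finset.sum_const]

private lemma stmt5_exists_P {n d : ℕ} (hdn : d ≤ n) :
    ∃ P : Matrix (Fin n) (Fin d) ℝ, Pᵀ * P = 1 := by
  classical
  refine ⟨Matrix.of fun i j => if i = Fin.castLE hdn j then (1:ℝ) else 0, ?_⟩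
  ext j k
  simp only [Matrix.mul_apply, Matrix.transpose_apply, Matrix.of_apply, ite_mul, one_mul,
    zero_mul, mul_ite, mul_one, mul_zero]
  rw [Finset.sum_ite_eq' Finset.univ (Fin.castLE hdn k)
    (fun i => if i = Fin.castLE hdn j then (1:ℝ) else 0)]
  simp [Matrix.one_apply, Fin.castLE_inj, eq_comm]

theorem stmt_5 (n d : ℕ) (hd : 0 < d) (hdn : d ≤ n)
    (A B : Matrix (Fin n) (Fin n) ℝ) (hA : A.IsSymm) (hB : B.PosDef)
    (f : ℝ → ℝ)
    (hf : ∀ ρ : ℝ, IsGreatest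
      {r : ℝ | ∃ P : Matrix (Fin n) (Fin d) ℝ, Pᵀ * P = 1 ∧
        (Pᵀ * (A - ρ • B) * P).trace = r} (f ρ)) :
    (∃! ρstar : ℝ, f ρstar = 0) ∧
    ∀ ρstar : ℝ, f ρstar = 0 →
      IsGreatest
        {r : ℝ | ∃ P : Matrix (Fin n) (Fin d) ℝ, Pᵀ * P = 1 ∧
          (Pᵀ * A * P).trace / (Pᵀ * B * P).trace = r} ρstar := by
  classical
  obtain ⟨c, C, hc, hcC, hPB⟩ := stmt5_trace_bounds hd hdn B hB
  have hC : 0 < C := lt_of_lt_of_le hc hcC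
  -- the key algebraic identity
  have key : ∀ (ρ : ℝ) (P : Matrix (Fin n) (Fin d) ℝ),
      (Pᵀ * (A - ρ • B) * P).trace = (Pᵀ * A * P).trace - ρ * (Pᵀ * B * P).trace := by
    intro ρ P
    have : Pᵀ * (A - ρ • B) * P = Pᵀ * A * P - ρ • (Pᵀ * B * P) := by
      rw [Matrix.mul_sub, Matrix.sub_mul, Matrix.mul_smul, Matrix.smul_mul]
    rw [this, Matrix.trace_sub, Matrix.trace_smul, smul_eq_mul]
  -- strict antitonicity
  have hanti : StrictAnti f := by
    intro ρ1 ρ2 h12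
    obtain ⟨P, hP, hPe⟩ := (hf ρ2).1
    have h1 : (Pᵀ * (A - ρ1 • B) * P).trace ≤ f ρ1 := (hf ρ1).2 ⟨P, hP, rfl⟩
    have e1 := key ρ1 P
    have e2 := key ρ2 P
    have hb := (hPB P hP).1
    nlinarith
  -- two-sided Lipschitz bounds
  have hlip : ∀ ρ1 ρ2 : ℝ, ρ1 ≤ ρ2 →
      c * (ρ2 - ρ1) ≤ f ρ1 - f ρ2 ∧ f ρ1 - f ρ2 ≤ C * (ρ2 - ρ1) := by
    intro ρ1 ρ2 h
    obtain ⟨P1, hP1, e1⟩ := (hf ρ1).1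
    obtain ⟨P2, hP2, e2⟩ := (hf ρ2).1
    have b1 : (P1ᵀ * (A - ρ2 • B) * P1).trace ≤ f ρ2 := (hf ρ2).2 ⟨P1, hP1, rfl⟩
    have b2 : (P2ᵀ * (A - ρ1 • B) * P2).trace ≤ f ρ1 := (hf ρ1).2 ⟨P2, hP2, rfl⟩
    have k11 := key ρ1 P1; have k12 := key ρ2 P1
    have k21 := key ρ1 P2; have k22 := key ρ2 P2
    have hb1 := hPB P1 hP1
    have hb2 := hPB P2 hP2
    rw [k11] at e1; rw [k22] at e2; rw [k12] at b1; rw [k21] at b2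
    constructor <;> nlinarith [hb1.1, hb1.2, hb2.1, hb2.2]
  -- continuity
  have hcont : Continuous f := by
    have : LipschitzWith (Real.toNNReal C) f := by
      apply LipschitzWith.of_dist_le_mul
      intro x y
      rw [Real.dist_eq, Real.dist_eq, Real.coe_toNNReal C hC.le]
      rcases le_total x y with h | h
      · have := hlip x y h
        rw [abs_of_nonneg (by nlinarith [this.1] : (0:ℝ) ≤ f x - f y),
          abs_of_nonpos (by linarith : x - y ≤ 0)]
        linarith [this.2]
      · have := hlip y x h
        rw [abs_of_nonpos (by nlinarith [this.1] : f x - f y ≤ 0),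
          abs_of_nonneg (by linarith : (0:ℝ) ≤ x - y)]
        linarith [this.2]
    exact this.continuous
  -- bracketing values
  set t : ℝ := |f 0| / c + 1 with ht
  have htpos : 0 < t := by positivity
  have hhi : f t < 0 := by
    have := (hlip 0 t (by linarith)).1
    have hct : c * t = |f 0| + c := by rw [ht]; field_simp
    have := abs_nonneg (f 0)
    have := le_abs_self (f 0)
    nlinarith
  have hlo : 0 < f (-t) := by
    have := (hlip (-t) 0 (by linarith)).1
    have hct : c * (0 - -t) = |f 0| + c := by rw [ht]; field_simp; ring
    have := neg_abs_le (f 0)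
    nlinarith
  -- existence of a zero via IVT
  obtain ⟨ρ0, -, hρ0⟩ : ∃ ρ0 ∈ Set.Icc (-t) t, f ρ0 = 0 := by
    have hsub := intermediate_value_Icc' (by linarith : -t ≤ t) hcont.continuousOn
    have : (0:ℝ) ∈ Set.Icc (f t) (f (-t)) := ⟨hhi.le, hlo.le⟩
    obtain ⟨ρ0, hmem, hz⟩ := hsub this
    exact ⟨ρ0, hmem, hz⟩
  constructor
  · exact ⟨ρ0, hρ0, fun y hy => hanti.injective (hy.trans hρ0.symm)⟩
  · intro ρs hρs
    constructor
    · obtain ⟨P, hP, hPe⟩ := (hf ρs).1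
      refine ⟨P, hP, ?_⟩
      have hb := (hPB P hP).1
      have hk := key ρs P
      rw [hρs] at hPe
      rw [div_eq_iff (by linarith : (Pᵀ * B * P).trace ≠ 0)]
      nlinarith
    · rintro r ⟨Q, hQ, rfl⟩
      have hb := (hPB Q hQ).1
      have hub : (Qᵀ * (A - ρs • B) * Q).trace ≤ f ρs := (hf ρs).2 ⟨Q, hQ, rfl⟩
      rw [hρs, key] at hub
      rw [div_le_iff₀ (by linarith : 0 < (Qᵀ * B * Q).trace)]
      linarith
end

section
/- Let A, B be symmetric n×n matrices with B positive definite, and define on the Stiefel manifold the Newton iteration ρ_{k+1} = trace(P_k^T A P_k)/trace(P_k^T B P_k), where P_k maximizes trace(P^T(A − ρ_k B)P) over P^T P = I_d. Then ρ_{k+1} = ρ_k − f(ρ_k)/f'(ρ_k), where f(ρ) = max_{P^T P = I_d} trace(P^T(A − ρB)P) and f'(ρ_k) = −trace(P_k^T B P_k). -/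
open Matrix

theorem stmt_19 (n d : ℕ) (hd : 0 < d) (hdn : d ≤ n)
    (A B : Matrix (Fin n) (Fin n) ℝ) (hA : A.IsSymm) (hB : B.PosDef)
    (f : ℝ → ℝ)
    (hf : ∀ ρ : ℝ, IsGreatest
      {r : ℝ | ∃ P : Matrix (Fin n) (Fin d) ℝ, Pᵀ * P = 1 ∧
        (Pᵀ * (A - ρ • B) * P).trace = r} (f ρ))
    (ρk : ℝ) (Pk : Matrix (Fin n) (Fin d) ℝ)
    (hPk : Pkᵀ * Pk = 1)
    (hmax : f ρk = (Pkᵀ * (A - ρk • B) * Pk).trace) :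
    (Pkᵀ * A * Pk).trace / (Pkᵀ * B * Pk).trace =
      ρk - f ρk / (-(Pkᵀ * B * Pk).trace) := by
  have hb : 0 < (Pkᵀ * B * Pk).trace := by
    rw [Matrix.trace]
    have : Nonempty (Fin d) := ⟨⟨0, hd⟩⟩
    apply Finset.sum_pos
    · intro i _
      have hcol : (fun j => Pk j i) ≠ 0 := by
        intro h
        have h1 : (Pkᵀ * Pk) i i = 1 := by rw [hPk]; simp
        rw [Matrix.mul_apply] at h1
        simp only [Matrix.transpose_apply] at h1
        have : ∀ j, Pk j i = 0 := fun j => congrFun h j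
        simp [this] at h1
      have hpos := hB.dotProduct_mulVec_pos (x := fun j => Pk j i) hcol
      simp only [Matrix.diag_apply] at hpos ⊢
      convert hpos using 1
      simp [Matrix.mul_apply, dotProduct, Matrix.mulVec, Finset.mul_sum, mul_comm, mul_left_comm]
      rw [Finset.sum_comm]
      exact Finset.sum_congr rfl fun y _ => Finset.sum_congr rfl fun x _ => by ring
    · exact Finset.univ_nonempty
  have hsplit : f ρk = (Pkᵀ * A * Pk).trace - ρk * (Pkᵀ * B * Pk).trace := by
    rw [hmax]
    have : Pkᵀ * (A - ρk • B) * Pk = Pkᵀ * A * Pk - ρk • (Pkᵀ * B * Pk) := by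
      rw [Matrix.mul_sub, Matrix.sub_mul, Matrix.mul_smul, Matrix.smul_mul]
    rw [this, Matrix.trace_sub, Matrix.trace_smul]
    simp
  rw [div_neg, sub_neg_eq_add, hsplit, sub_div, mul_div_assoc, div_self hb.ne', mul_one]
  ring
end
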